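/- Runs of length 1 do not affect the Grundy value of GA1: if two bit strings have the property that their sequences of run lengths agree after deleting all entries equal to 1, then the two GA1 positions have the same Grundy value. -/

import Mathlib

/-- The minimum excludant of a set of naturals. -/
noncomputable def mex (S : Set ℕ) : ℕ := sInf {n : ℕ | n ∉ S}

/-- The entropy of a bit string: the number of adjacent pairs of unequal bits. -/
def entropy (b : List Bool) : ℕ := (b.zip b.tail).countP fun p => p.1 != p.2

/-- Crossover at position `k` (1-indexed): flip bits `b₁,…,b_k`. -/
def ga1Crossover (k : ℕ) (b : List Bool) : List Bool := (b.take k).map (! ·) ++ b.drop k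

/-- Mutation at (0-indexed) position `i`: flip bit `i`. -/
def ga1Mutate (i : ℕ) (b : List Bool) : List Bool := b.set i (!(b.getD i false))

/-- The legal moves of GA1: a crossover or a mutation that strictly increases entropy. -/
def ga1Move (b b' : List Bool) : Prop :=
  ((∃ k, 1 ≤ k ∧ k ≤ b.length - 1 ∧ b' = ga1Crossover k b) ∨
    (∃ i, i < b.length ∧ b' = ga1Mutate i b)) ∧
  entropy b < entropy b'

/-- Helper for computing run lengths: `cur` is the current bit, `cnt` the length of the
current run so far. -/
def runLengthsAux (cur : Bool) (cnt : ℕ) : List Bool → List ℕ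
  | [] => [cnt]
  | a :: rest => if a = cur then runLengthsAux cur (cnt + 1) rest
                 else cnt :: runLengthsAux a 1 rest

/-- The sequence of run lengths of a bit string (a run is a maximal constant sub-string). -/
def runLengths : List Bool → List ℕ
  | [] => []
  | a :: rest => runLengthsAux a 1 rest

/-- decode a run-length list into a bit string -/
def dec (c : Bool) : List ℕ → List Bool
  | [] => []
  | l :: L => List.replicate l c ++ dec (!c) L

lemma dec_nil (c : Bool) : dec c [] = [] := rfl
lemma dec_cons (c : Bool) (l : ℕ) (L : List ℕ) :
    dec c (l :: L) = List.replicate l c ++ dec (!c) L := rfl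

lemma dec_zero_cons (c : Bool) (L : List ℕ) : dec c (0 :: L) = dec (!c) L := by
  simp [dec_cons]

lemma dec_congr_suffix {A A' : List ℕ} (h : ∀ c, dec c A = dec c A') :
    ∀ (M : List ℕ) (c : Bool), dec c (M ++ A) = dec c (M ++ A') := by
  intro M
  induction M with
  | nil => intro c; exact h c
  | cons m M ih => intro c; simp only [List.cons_append, dec_cons, ih]

lemma dec_merge_zero (c : Bool) (x y : ℕ) (N : List ℕ) :
    dec c (x :: 0 :: y :: N) = dec c ((x + y) :: N) := by
  rw [dec_cons, dec_zero_cons, Bool.not_not, dec_cons, dec_cons, List.replicate_add,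
    List.append_assoc]

lemma dec_trailing_zero (c : Bool) (x : ℕ) :
    dec c [x, 0] = dec c [x] := by
  rw [dec_cons, dec_zero_cons, Bool.not_not]
  rfl

lemma length_dec (c : Bool) (L : List ℕ) : (dec c L).length = L.sum := by
  induction L generalizing c with
  | nil => rfl
  | cons l L ih => simp [dec_cons, ih]

lemma rla_replicate (n : ℕ) : ∀ (rest : List Bool) (c : Bool) (m : ℕ),
    runLengthsAux c m (List.replicate n c ++ rest) = runLengthsAux c (m + n) rest := by
  induction n with
  | zero => simp
  | succ n ih =>
      intro rest c m
      rw [List.replicate_succ, List.cons_append]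
      show runLengthsAux c m (c :: _) = _
      rw [runLengthsAux, if_pos rfl, ih]
      congr 1
      omega

lemma rla_pos : ∀ (rest : List Bool) (c : Bool) (m : ℕ), 1 ≤ m →
    ∀ x ∈ runLengthsAux c m rest, 1 ≤ x := by
  intro rest
  induction rest with
  | nil => intro c m hm x hx; simp [runLengthsAux] at hx; omega
  | cons a rest ih =>
      intro c m hm x hx
      rw [runLengthsAux] at hx
      by_cases h : a = c
      · rw [if_pos h] at hx; exact ih c (m+1) (by omega) x hx
      · rw [if_neg h] at hx
        rcases List.mem_cons.1 hx with h' | h'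
        · omega
        · exact ih a 1 le_rfl x h'

lemma aux_dec : ∀ (rest : List Bool) (c : Bool) (m : ℕ),
    dec c (runLengthsAux c m rest) = List.replicate m c ++ rest := by
  intro rest
  induction rest with
  | nil => intro c m; simp [runLengthsAux, dec_cons, dec_nil]
  | cons a rest ih =>
      intro c m
      rw [runLengthsAux]
      by_cases h : a = c
      · rw [if_pos h, ih, h, List.replicate_succ', List.append_assoc, List.singleton_append]
      · rw [if_neg h, dec_cons]
        have ha : a = !c := by
          cases a <;> cases c <;> simp_all
        rw [← ha, ih]
        simp

lemma dec_runLengths (b : List Bool) : ∀ a rest, b = a :: rest → dec a (runLengths b) = b := by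
  intro a rest h
  subst h
  rw [runLengths, aux_dec]
  simp [List.replicate_succ]

lemma runLengths_pos (b : List Bool) : ∀ x ∈ runLengths b, 1 ≤ x := by
  cases b with
  | nil => simp [runLengths]
  | cons a rest => exact rla_pos rest a 1 le_rfl

lemma dec_surj (b : List Bool) : ∃ c L, (∀ x ∈ L, 1 ≤ x) ∧ b = dec c L ∧ runLengths b = L := by
  cases b with
  | nil => exact ⟨false, [], by simp, rfl, rfl⟩
  | cons a rest =>
      exact ⟨a, runLengths (a :: rest), runLengths_pos _,
        (dec_runLengths _ a rest rfl).symm, rfl⟩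

lemma runLengths_dec : ∀ (L : List ℕ) (c : Bool), (∀ x ∈ L, 1 ≤ x) →
    runLengths (dec c L) = L := by
  intro L
  induction L with
  | nil => intro c _; rfl
  | cons l L ih =>
      intro c hpos
      have hl : 1 ≤ l := hpos l (by simp)
      rw [dec_cons]
      have : List.replicate l c = c :: List.replicate (l - 1) c := by
        rw [← List.replicate_succ]; congr 1; omega
      rw [this, List.cons_append, runLengths, rla_replicate]
      have h1 : 1 + (l - 1) = l := by omega
      rw [h1]
      -- now: runLengthsAux c l (dec (!c) L) = l :: L
      cases L with
      | nil => rfl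
      | cons m L' =>
          have hm : 1 ≤ m := hpos m (by simp)
          rw [dec_cons]
          have hrep : List.replicate m (!c) = (!c) :: List.replicate (m - 1) (!c) := by
            rw [← List.replicate_succ]; congr 1; omega
          rw [hrep, List.cons_append, runLengthsAux, if_neg (by cases c <;> simp)]
          rw [rla_replicate]
          have h2 : 1 + (m - 1) = m := by omega
          rw [h2]
          have := ih (!c) (fun x hx => hpos x (by simp [hx]))
          rw [dec_cons, hrep, List.cons_append, runLengths, rla_replicate, h2] at this
          rw [this]

lemma entropy_nil : entropy [] = 0 := rfl
lemma entropy_single (x : Bool) : entropy [x] = 0 := rfl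

lemma entropy_cons_cons (x y : Bool) (t : List Bool) :
    entropy (x :: y :: t) = (if x = y then 0 else 1) + entropy (y :: t) := by
  unfold entropy
  simp only [List.tail_cons, List.zip_cons_cons, List.countP_cons]
  by_cases h : x = y
  · simp [h]
  · have hxy : (x != y) = true := by cases x <;> cases y <;> simp_all
    rw [if_neg h, hxy, if_pos rfl]
    omega

lemma entropy_rla : ∀ (rest : List Bool) (c : Bool) (m : ℕ),
    entropy (c :: rest) + 1 = (runLengthsAux c m rest).length := by
  intro rest
  induction rest with
  | nil => intro c m; simp [entropy_single, runLengthsAux]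
  | cons a rest ih =>
      intro c m
      rw [entropy_cons_cons, runLengthsAux]
      by_cases h : a = c
      · rw [if_pos h, if_pos h.symm, ← ih c (m+1), h]; omega
      · rw [if_neg h, if_neg (fun hh => h hh.symm), List.length_cons, ← ih a 1]
        omega

lemma entropy_runs (b : List Bool) (hb : b ≠ []) :
    entropy b + 1 = (runLengths b).length := by
  obtain ⟨a, t, rfl⟩ := List.exists_cons_of_ne_nil hb
  rw [runLengths]
  exact entropy_rla t a 1

lemma dec_ne_nil (c : Bool) (L : List ℕ) (hpos : ∀ x ∈ L, 1 ≤ x) (hL : L ≠ []) :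
    dec c L ≠ [] := by
  intro h
  have := length_dec c L
  rw [h] at this
  obtain ⟨l, L', rfl⟩ := List.exists_cons_of_ne_nil hL
  have h1 := hpos l (by simp)
  rw [List.sum_cons] at this
  simp at this
  omega

lemma entropy_dec (c : Bool) (L : List ℕ) (hpos : ∀ x ∈ L, 1 ≤ x) (hL : L ≠ []) :
    entropy (dec c L) + 1 = L.length := by
  rw [entropy_runs _ (dec_ne_nil c L hpos hL), runLengths_dec L c hpos]

lemma replicate_split (l a : ℕ) (c : Bool) (h : a < l) :
    List.replicate l c = List.replicate a c ++ c :: List.replicate (l - 1 - a) c := by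
  rw [← List.replicate_succ, ← List.replicate_add]
  congr 1
  omega

lemma crossover_prefix (p : ℕ) (k : ℕ) (c : Bool) (t : List Bool) :
    ga1Crossover (p + k) (List.replicate p c ++ t)
      = List.replicate p (!c) ++ ga1Crossover k t := by
  unfold ga1Crossover
  have hl : (List.replicate p c).length = p := List.length_replicate (n := p) (a := c)
  rw [show p + k = (List.replicate p c).length + k by rw [hl]]
  rw [List.take_length_add_append, List.drop_length_add_append, List.map_append, List.map_replicate]
  simp [List.append_assoc]

lemma crossover_dec : ∀ (L₁ : List ℕ) (c : Bool) (l : ℕ) (L₂ : List ℕ) (a : ℕ),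
    1 ≤ a → a ≤ l →
    ga1Crossover (L₁.sum + a) (dec c (L₁ ++ l :: L₂))
      = dec (!c) (L₁ ++ a :: (l - a) :: L₂) := by
  intro L₁
  induction L₁ with
  | nil =>
      intro c l L₂ a h1 h2
      simp only [List.nil_append, List.sum_nil, Nat.zero_add]
      rw [dec_cons, dec_cons]
      unfold ga1Crossover
      rw [List.take_append_of_le_length (by simp; omega),
          List.drop_append_of_le_length (by simp; omega),
          List.take_replicate, List.drop_replicate, List.map_replicate]
      have : a ⊓ l = a := by omega
      rw [this, dec_cons, Bool.not_not]
  | cons p P ih =>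
      intro c l L₂ a h1 h2
      rw [List.cons_append, dec_cons, List.sum_cons,
          show p + P.sum + a = p + (P.sum + a) by omega,
          crossover_prefix, ih (!c) l L₂ a h1 h2, List.cons_append, dec_cons, Bool.not_not]

lemma mutate_prefix (p i : ℕ) (c : Bool) (t : List Bool) :
    ga1Mutate (p + i) (List.replicate p c ++ t)
      = List.replicate p c ++ ga1Mutate i t := by
  unfold ga1Mutate
  have hl : (List.replicate p c).length = p := List.length_replicate (n := p) (a := c)
  rw [List.getD_append_right _ _ _ _ (by omega), hl,
      show p + i - p = i by omega,
      List.set_append, if_neg (by omega), hl, show p + i - p = i by omega]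

lemma mutate_dec : ∀ (L₁ : List ℕ) (c : Bool) (l : ℕ) (L₂ : List ℕ) (a : ℕ),
    a < l →
    ga1Mutate (L₁.sum + a) (dec c (L₁ ++ l :: L₂))
      = dec c (L₁ ++ a :: 1 :: (l - 1 - a) :: L₂) := by
  intro L₁
  induction L₁ with
  | nil =>
      intro c l L₂ a h
      simp only [List.nil_append, List.sum_nil, Nat.zero_add]
      rw [dec_cons]
      unfold ga1Mutate
      have hget : (List.replicate l c ++ dec (!c) L₂).getD a false = c := by
        rw [List.getD_append _ _ _ _ (by simp; omega), List.getD_eq_getElem?_getD,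
            List.getElem?_replicate, if_pos h]
        rfl
      rw [hget, List.set_append, if_pos (by simp; omega)]
      rw [replicate_split l a c h]
      rw [List.set_append, if_neg (by simp), List.length_replicate,
          show a - a = 0 by omega, List.set_cons_zero]
      rw [dec_cons, dec_cons, dec_cons, Bool.not_not]
      simp [List.replicate_succ, List.append_assoc]
  | cons p P ih =>
      intro c l L₂ a h
      rw [List.cons_append, dec_cons, List.sum_cons,
          show p + P.sum + a = p + (P.sum + a) by omega,
          mutate_prefix, ih (!c) l L₂ a h, List.cons_append, dec_cons]

lemma decompose_idx : ∀ (L : List ℕ) (k : ℕ), k < L.sum →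
    ∃ P l S a, L = P ++ l :: S ∧ k = P.sum + a ∧ a < l := by
  intro L
  induction L with
  | nil => intro k hk; simp at hk
  | cons l L ih =>
      intro k hk
      by_cases h : k < l
      · exact ⟨[], l, L, k, by simp, by simp, h⟩
      · rw [List.sum_cons] at hk
        obtain ⟨P, l', S, a, h1, h2, h3⟩ := ih (k - l) (by omega)
        exact ⟨l :: P, l', S, a, by rw [h1]; rfl, by rw [List.sum_cons]; omega, h3⟩

/-- Abstract move on run-length lists: split a run `l` into two parts (crossover)
or into `a, 1, b` (interior mutation). -/
def HMove (L L' : List ℕ) : Prop :=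
  ∃ P l S, L = P ++ l :: S ∧
    ((∃ a, 1 ≤ a ∧ a < l ∧ L' = P ++ a :: (l - a) :: S) ∨
     (∃ a b, 1 ≤ a ∧ 1 ≤ b ∧ a + 1 + b = l ∧ L' = P ++ a :: 1 :: b :: S))

lemma hmove_realize (c : Bool) (L L' : List ℕ) (hpos : ∀ x ∈ L, 1 ≤ x)
    (h : HMove L L') :
    ∃ b', ga1Move (dec c L) b' ∧ runLengths b' = L' := by
  obtain ⟨P, l, S, hL, hcase⟩ := h
  have posP : ∀ x ∈ P, 1 ≤ x := fun x hx => hpos x (by rw [hL]; exact List.mem_append_left _ hx)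
  have posS : ∀ x ∈ S, 1 ≤ x := fun x hx => hpos x (by rw [hL]; simp [hx])
  have hlenL : L.length = P.length + S.length + 1 := by rw [hL]; simp; omega
  have hLne : L ≠ [] := by rw [hL]; simp
  have e1 := entropy_dec c L hpos hLne
  have hsumL : L.sum = P.sum + l + S.sum := by rw [hL]; simp; omega
  rcases hcase with ⟨a, ha1, ha2, hL'⟩ | ⟨a, bb, ha1, hb1, hab, hL'⟩
  · -- crossover
    have pos' : ∀ x ∈ L', 1 ≤ x := by
      rw [hL']
      intro x hx
      simp only [List.mem_append, List.mem_cons] at hx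
      rcases hx with hx | hx | hx | hx
      · exact posP x hx
      · omega
      · omega
      · exact posS x hx
    refine ⟨dec (!c) L', ⟨Or.inl ⟨P.sum + a, by omega, ?_, ?_⟩, ?_⟩, runLengths_dec L' (!c) pos'⟩
    · rw [length_dec]; omega
    · rw [hL, crossover_dec P c l S a ha1 (by omega), ← hL']
    · have e2 := entropy_dec (!c) L' pos' (by rw [hL']; simp)
      have : L'.length = P.length + S.length + 2 := by rw [hL']; simp; omega
      omega
  · -- mutation
    have pos' : ∀ x ∈ L', 1 ≤ x := by
      rw [hL']
      intro x hx
      simp only [List.mem_append, List.mem_cons] at hx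
      rcases hx with hx | hx | hx | hx | hx
      · exact posP x hx
      · omega
      · omega
      · omega
      · exact posS x hx
    refine ⟨dec c L', ⟨Or.inr ⟨P.sum + a, by rw [length_dec]; omega, ?_⟩, ?_⟩,
      runLengths_dec L' c pos'⟩
    · rw [hL, mutate_dec P c l S a (by omega), ← show bb = l - 1 - a by omega, ← hL']
    · have e2 := entropy_dec c L' pos' (by rw [hL']; simp)
      have : L'.length = P.length + S.length + 3 := by rw [hL']; simp; omega
      omega

lemma dec_trailing_zero3 (c : Bool) (x y : ℕ) : dec c [x, y, 0] = dec c [x, y] := by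
  rw [dec_cons, dec_trailing_zero, ← dec_cons]

lemma not_entropy_lt (c c' : Bool) (M M' : List ℕ)
    (hpos : ∀ x ∈ M, 1 ≤ x) (hpos' : ∀ x ∈ M', 1 ≤ x)
    (hM : M ≠ []) (hM' : M' ≠ []) (hlen : M'.length ≤ M.length) :
    ¬ entropy (dec c M) < entropy (dec c' M') := by
  have e1 := entropy_dec c M hpos hM
  have e2 := entropy_dec c' M' hpos' hM'
  omega

lemma move_hmove {b b' : List Bool} (h : ga1Move b b') :
    HMove (runLengths b) (runLengths b') := by
  obtain ⟨c, L, hpos, rfl, hrl⟩ := dec_surj b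
  rw [hrl]
  obtain ⟨hmv, hent⟩ := h
  rcases hmv with ⟨k, hk1, hk2, rfl⟩ | ⟨i, hi, rfl⟩
  · -- crossover
    rw [length_dec] at hk2
    obtain ⟨P, l, S, a', hL, hka, ha'⟩ := decompose_idx L (k - 1) (by omega)
    have posP : ∀ x ∈ P, 1 ≤ x := fun x hx => hpos x (by rw [hL]; exact List.mem_append_left _ hx)
    have posS : ∀ x ∈ S, 1 ≤ x := fun x hx => hpos x (by rw [hL]; simp [hx])
    have hk : k = P.sum + (a' + 1) := by omega
    have hcr : ga1Crossover k (dec c L) = dec (!c) (P ++ (a' + 1) :: (l - (a' + 1)) :: S) := by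
      rw [hk, hL]; exact crossover_dec P c l S (a' + 1) (by omega) (by omega)
    by_cases hal : a' + 1 < l
    · have pos' : ∀ x ∈ P ++ (a' + 1) :: (l - (a' + 1)) :: S, 1 ≤ x := by
        intro x hx
        simp only [List.mem_append, List.mem_cons] at hx
        rcases hx with hx | hx | hx | hx
        · exact posP x hx
        · omega
        · omega
        · exact posS x hx
      rw [hcr, runLengths_dec _ _ pos']
      exact ⟨P, l, S, hL, Or.inl ⟨a' + 1, by omega, hal, rfl⟩⟩
    · exfalso
      have hal' : a' + 1 = l := by omega
      have hsumL : L.sum = P.sum + l + S.sum := by rw [hL]; simp; omega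
      cases S with
      | nil => simp at hsumL; omega
      | cons m S' =>
        have hcr2 : ga1Crossover k (dec c L) = dec (!c) (P ++ (l + m) :: S') := by
          rw [hcr, hal', Nat.sub_self]
          exact dec_congr_suffix (fun c => dec_merge_zero c l m S') P (!c)
        rw [hcr2] at hent
        have pos' : ∀ x ∈ P ++ (l + m) :: S', 1 ≤ x := by
          intro x hx
          simp only [List.mem_append, List.mem_cons] at hx
          rcases hx with hx | hx | hx
          · exact posP x hx
          · have := posS m (by simp); omega
          · exact posS x (by simp [hx])
        refine not_entropy_lt c (!c) L (P ++ (l + m) :: S') hpos pos'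
          (by rw [hL]; simp) (by simp) (by rw [hL]; simp only [List.length_append, List.length_cons, List.length_nil]; omega) hent
  · -- mutation
    rw [length_dec] at hi
    obtain ⟨P, l, S, a, hL, hia, hal⟩ := decompose_idx L i hi
    have posP : ∀ x ∈ P, 1 ≤ x := fun x hx => hpos x (by rw [hL]; exact List.mem_append_left _ hx)
    have posS : ∀ x ∈ S, 1 ≤ x := fun x hx => hpos x (by rw [hL]; simp [hx])
    have hl1 : 1 ≤ l := hpos l (by rw [hL]; simp)
    have hmu : ga1Mutate i (dec c L) = dec c (P ++ a :: 1 :: (l - 1 - a) :: S) := by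
      rw [hia, hL]; exact mutate_dec P c l S a hal
    by_cases hcase1 : 1 ≤ a ∧ a + 2 ≤ l
    · have pos' : ∀ x ∈ P ++ a :: 1 :: (l - 1 - a) :: S, 1 ≤ x := by
        intro x hx
        simp only [List.mem_append, List.mem_cons] at hx
        rcases hx with hx | hx | hx | hx | hx
        · exact posP x hx
        · omega
        · omega
        · omega
        · exact posS x hx
      rw [hmu, runLengths_dec _ _ pos']
      exact ⟨P, l, S, hL, Or.inr ⟨a, l - 1 - a, hcase1.1, by omega, by omega, rfl⟩⟩
    · by_cases ha0 : a = 0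
      · subst ha0
        rcases P.eq_nil_or_concat with rfl | ⟨Q, p, rfl⟩
        · -- P = []
          have hmu2 : ga1Mutate i (dec c L) = dec (!c) (1 :: (l - 1) :: S) := by
            rw [hmu, List.nil_append, Nat.sub_zero, dec_zero_cons]
          by_cases hl2 : 2 ≤ l
          · have pos' : ∀ x ∈ (1 : ℕ) :: (l - 1) :: S, 1 ≤ x := by
              intro x hx
              simp only [List.mem_cons] at hx
              rcases hx with hx | hx | hx
              · omega
              · omega
              · exact posS x hx
            rw [hmu2, runLengths_dec _ _ pos']
            exact ⟨[], l, S, by simpa using hL, Or.inl ⟨1, le_rfl, by omega, by simp⟩⟩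
          · exfalso
            have hl' : l = 1 := by omega
            subst hl'
            cases S with
            | nil =>
              have hmu3 : ga1Mutate i (dec c L) = dec (!c) [1] := by
                rw [hmu2]; exact dec_trailing_zero (!c) 1
              rw [hmu3] at hent
              exact not_entropy_lt c (!c) L [1] hpos (by simp)
                (by rw [hL]; simp) (by simp) (by rw [hL]; simp) hent
            | cons m S' =>
              have hmu3 : ga1Mutate i (dec c L) = dec (!c) ((1 + m) :: S') := by
                rw [hmu2]; exact dec_merge_zero (!c) 1 m S'
              rw [hmu3] at hent
              have pos' : ∀ x ∈ (1 + m) :: S', 1 ≤ x := by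
                intro x hx
                rcases List.mem_cons.1 hx with hx | hx
                · omega
                · exact posS x (by simp [hx])
              exact not_entropy_lt c (!c) L ((1 + m) :: S') hpos pos'
                (by rw [hL]; simp) (by simp) (by rw [hL]; simp) hent
        · -- P = Q ++ [p]
          exfalso
          simp only [List.concat_eq_append] at hL hia hmu posP
          have posQ : ∀ x ∈ Q, 1 ≤ x := fun x hx => posP x (by simp [hx])
          have hp1 : 1 ≤ p := posP p (by simp)
          have hmu2 : ga1Mutate i (dec c L) = dec c (Q ++ (p + 1) :: (l - 1) :: S) := by
            rw [hmu, Nat.sub_zero,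
              show Q ++ [p] ++ 0 :: 1 :: (l - 1) :: S = Q ++ p :: 0 :: 1 :: ((l - 1) :: S) by simp]
            exact dec_congr_suffix (fun c => dec_merge_zero c p 1 ((l - 1) :: S)) Q c
          by_cases hl2 : 2 ≤ l
          · rw [hmu2] at hent
            have pos' : ∀ x ∈ Q ++ (p + 1) :: (l - 1) :: S, 1 ≤ x := by
              intro x hx
              simp only [List.mem_append, List.mem_cons] at hx
              rcases hx with hx | hx | hx | hx
              · exact posQ x hx
              · omega
              · omega
              · exact posS x hx
            exact not_entropy_lt c c L (Q ++ (p + 1) :: (l - 1) :: S) hpos pos'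
              (by rw [hL]; simp) (by simp) (by rw [hL]; simp only [List.length_append, List.length_cons, List.length_nil]; omega) hent
          · have hl' : l = 1 := by omega
            subst hl'
            rw [Nat.sub_self] at hmu2
            cases S with
            | nil =>
              have hmu3 : ga1Mutate i (dec c L) = dec c (Q ++ [p + 1]) := by
                rw [hmu2]
                exact dec_congr_suffix (fun c => dec_trailing_zero c (p + 1)) Q c
              rw [hmu3] at hent
              have pos' : ∀ x ∈ Q ++ [p + 1], 1 ≤ x := by
                intro x hx
                rcases List.mem_append.1 hx with hx | hx
                · exact posQ x hx
                · simp at hx; omega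
              exact not_entropy_lt c c L (Q ++ [p + 1]) hpos pos'
                (by rw [hL]; simp) (by simp) (by rw [hL]; simp only [List.length_append, List.length_cons, List.length_nil]; omega) hent
            | cons m S' =>
              have hmu3 : ga1Mutate i (dec c L) = dec c (Q ++ (p + 1 + m) :: S') := by
                rw [hmu2]
                exact dec_congr_suffix (fun c => dec_merge_zero c (p + 1) m S') Q c
              rw [hmu3] at hent
              have pos' : ∀ x ∈ Q ++ (p + 1 + m) :: S', 1 ≤ x := by
                intro x hx
                rcases List.mem_append.1 hx with hx | hx
                · exact posQ x hx
                · rcases List.mem_cons.1 hx with hx | hx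
                  · omega
                  · exact posS x (by simp [hx])
              exact not_entropy_lt c c L (Q ++ (p + 1 + m) :: S') hpos pos'
                (by rw [hL]; simp) (by simp) (by rw [hL]; simp only [List.length_append, List.length_cons, List.length_nil]; omega) hent
      · -- a = l - 1, 1 ≤ a
        have haeq : a = l - 1 ∧ 1 ≤ a ∧ 2 ≤ l := by omega
        have hz : l - 1 - a = 0 := by omega
        rw [hz] at hmu
        cases S with
        | nil =>
          have hmu2 : ga1Mutate i (dec c L) = dec c (P ++ [a, 1]) := by
            rw [hmu]
            exact dec_congr_suffix (fun c => dec_trailing_zero3 c a 1) P c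
          have pos' : ∀ x ∈ P ++ [a, 1], 1 ≤ x := by
            intro x hx
            rcases List.mem_append.1 hx with hx | hx
            · exact posP x hx
            · simp at hx; omega
          rw [hmu2, runLengths_dec _ _ pos']
          refine ⟨P, l, [], hL, Or.inl ⟨a, by omega, by omega, ?_⟩⟩
          rw [show l - a = 1 by omega]
        | cons m S' =>
          exfalso
          have hmu2 : ga1Mutate i (dec c L) = dec c (P ++ a :: (1 + m) :: S') := by
            rw [hmu,
              show P ++ a :: 1 :: 0 :: m :: S' = (P ++ [a]) ++ 1 :: 0 :: m :: S' by simp,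
              show P ++ a :: (1 + m) :: S' = (P ++ [a]) ++ (1 + m) :: S' by simp]
            exact dec_congr_suffix (fun c => dec_merge_zero c 1 m S') (P ++ [a]) c
          rw [hmu2] at hent
          have pos' : ∀ x ∈ P ++ a :: (1 + m) :: S', 1 ≤ x := by
            intro x hx
            simp only [List.mem_append, List.mem_cons] at hx
            rcases hx with hx | hx | hx | hx
            · exact posP x hx
            · omega
            · omega
            · exact posS x (by simp [hx])
          exact not_entropy_lt c c L (P ++ a :: (1 + m) :: S') hpos pos'
            (by rw [hL]; simp) (by simp) (by rw [hL]; simp only [List.length_append, List.length_cons, List.length_nil]; omega) hent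

lemma filter_split (p : ℕ → Bool) : ∀ (L X Y : List ℕ) (a : ℕ),
    List.filter p L = X ++ a :: Y →
    ∃ P S, L = P ++ a :: S ∧ List.filter p P = X ∧ List.filter p S = Y := by
  intro L
  induction L with
  | nil => intro X Y a h; simp at h
  | cons l L ih =>
      intro X Y a h
      rw [List.filter_cons] at h
      by_cases hp : p l = true
      · rw [if_pos hp] at h
        cases X with
        | nil =>
            rw [List.nil_append] at h
            injection h with h1 h2
            exact ⟨[], L, by rw [h1]; rfl, by simp, h2⟩
        | cons x X' =>
            rw [List.cons_append] at h
            injection h with h1 h2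
            obtain ⟨P, S, hL, hP, hS⟩ := ih X' Y a h2
            exact ⟨l :: P, S, by rw [List.cons_append, hL],
              by rw [List.filter_cons, if_pos hp, hP, h1], hS⟩
      · rw [if_neg hp] at h
        obtain ⟨P, S, hL, hP, hS⟩ := ih X Y a h
        exact ⟨l :: P, S, by rw [List.cons_append, hL],
          by rw [List.filter_cons, if_neg hp, hP], hS⟩

lemma hmove_transport {L₁ L₂ L₁' : List ℕ}
    (hf : L₁.filter (· ≠ 1) = L₂.filter (· ≠ 1)) (h : HMove L₁ L₁') :
    ∃ L₂', HMove L₂ L₂' ∧ L₁'.filter (· ≠ 1) = L₂'.filter (· ≠ 1) := by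
  obtain ⟨P, l, S, hL, hcase⟩ := h
  have hl2 : 2 ≤ l := by
    rcases hcase with ⟨a, h1, h2, _⟩ | ⟨a, b, h1, h2, h3, _⟩ <;> omega
  have hlb : (decide (l ≠ 1)) = true := by simp; omega
  have h1 : L₁.filter (· ≠ 1) = P.filter (· ≠ 1) ++ l :: S.filter (· ≠ 1) := by
    rw [hL, List.filter_append, List.filter_cons, if_pos hlb]
  obtain ⟨P₂, S₂, hL₂, hP₂, hS₂⟩ := filter_split _ L₂ _ _ l (by rw [← hf, h1])
  rcases hcase with ⟨a, ha1, ha2, hL'⟩ | ⟨a, b, ha1, hb1, hab, hL'⟩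
  · refine ⟨P₂ ++ a :: (l - a) :: S₂, ⟨P₂, l, S₂, hL₂, Or.inl ⟨a, ha1, ha2, rfl⟩⟩, ?_⟩
    rw [hL']
    simp only [List.filter_append, List.filter_cons]
    rw [hP₂, hS₂]
  · refine ⟨P₂ ++ a :: 1 :: b :: S₂, ⟨P₂, l, S₂, hL₂, Or.inr ⟨a, b, ha1, hb1, hab, rfl⟩⟩, ?_⟩
    rw [hL']
    simp only [List.filter_append, List.filter_cons]
    rw [hP₂, hS₂]

def mu (L : List ℕ) : ℕ := (L.map (· - 1)).sum

lemma mu_filter (L : List ℕ) : mu (L.filter (· ≠ 1)) = mu L := by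
  induction L with
  | nil => rfl
  | cons l L ih =>
      rw [List.filter_cons]
      by_cases h : l = 1
      · subst h
        rw [if_neg (by simp)]
        unfold mu at *
        simp only [List.map_cons, List.sum_cons, ← ih]
        simp [List.filter]
      · rw [if_pos (by simp [h])]
        unfold mu at *
        simp only [List.map_cons, List.sum_cons, ih]

lemma hmove_mu {L L' : List ℕ} (h : HMove L L') : mu L' < mu L := by
  obtain ⟨P, l, S, hL, hcase⟩ := h
  rcases hcase with ⟨a, h1, h2, hL'⟩ | ⟨a, b, h1, h2, h3, hL'⟩ <;>
    subst hL <;> subst hL' <;>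
    simp only [mu, List.map_append, List.map_cons, List.sum_append, List.sum_cons] <;>
    omega

/-- Runs of length 1 do not affect the Grundy value of GA1: if two bit strings
have sequences of run lengths that agree after deleting all entries equal to 1, then the two
GA1 positions have the same Grundy value. -/
theorem ga1_grundy_ignores_singleton_runs
    (g : List Bool → ℕ)
    (hg : ∀ b, g b = mex {m | ∃ b', ga1Move b b' ∧ m = g b'})
    (b₁ b₂ : List Bool)
    (h : (runLengths b₁).filter (· ≠ 1) = (runLengths b₂).filter (· ≠ 1)) :
    g b₁ = g b₂ := by
  suffices H : ∀ n b₁ b₂, mu (runLengths b₁) = n →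
      (runLengths b₁).filter (· ≠ 1) = (runLengths b₂).filter (· ≠ 1) → g b₁ = g b₂ by
    exact H _ b₁ b₂ rfl h
  intro n
  induction n using Nat.strong_induction_on with
  | _ n ih =>
    intro b₁ b₂ hmu hf
    have key : ∀ (x y : List Bool), mu (runLengths x) = n →
        (runLengths x).filter (· ≠ 1) = (runLengths y).filter (· ≠ 1) →
        {m | ∃ b', ga1Move x b' ∧ m = g b'} ⊆ {m | ∃ b', ga1Move y b' ∧ m = g b'} := by
      intro x y hmux hfxy m hm
      obtain ⟨b', hmv, rfl⟩ := hm
      have hH := move_hmove hmv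
      obtain ⟨L₂', hH₂, hf'⟩ := hmove_transport hfxy hH
      obtain ⟨cy, Ly, hposy, hy, hrly⟩ := dec_surj y
      rw [hrly] at hH₂
      obtain ⟨b₂', hmv₂, hrl₂⟩ := hmove_realize cy Ly L₂' hposy hH₂
      rw [← hy] at hmv₂
      refine ⟨b₂', hmv₂, ?_⟩
      have hlt : mu (runLengths b') < n := by
        rw [← hmux]; exact hmove_mu hH
      exact ih _ hlt b' b₂' rfl (by rw [hrl₂]; exact hf')
    have hmu₂ : mu (runLengths b₂) = n := by
      rw [← mu_filter (runLengths b₂), ← hf, mu_filter, hmu]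
    rw [hg b₁, hg b₂]
    congr 1
    exact Set.Subset.antisymm (key b₁ b₂ hmu hf) (key b₂ b₁ hmu₂ hf.symm)
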